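/- Let A be a commutative ring and n a natural number such that n is invertible in A. Set s = (1+t)^n - 1 in the formal power series ring A[[t]]. Then there exists a power series f with zero constant term such that 1 + s = (1 + f(s))^n in A[[t]] (where f(s) denotes substitution of s into f). -/

import Mathlib

open PowerSeries

/-- Substitution of a power series `s` (with nilpotent/zero constant term) into `f`:
the `m`-th coefficient of `f(s)` is `∑_{n ≤ m} (coeff n f) * (coeff m (s^n))`. -/
noncomputable def PowerSeries.substitute {A : Type*} [CommRing A]
    (s f : PowerSeries A) : PowerSeries A :=
  PowerSeries.mk fun m =>
    ∑ n ∈ Finset.range (m + 1), (PowerSeries.coeff n f) * (PowerSeries.coeff m (s ^ n))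

/-- Coefficients of the compositional inverse, defined recursively. -/
noncomputable def rootCoeff {A : Type*} [CommRing A] (s : PowerSeries A) (b : A) : ℕ → A
  | m => b ^ m * ((if m = 1 then (1 : A) else 0) -
      ∑ k ∈ (Finset.range m).attach, rootCoeff s b k * PowerSeries.coeff m (s ^ (k : ℕ)))
  decreasing_by exact Finset.mem_range.mp k.2

lemma rootCoeff_eq {A : Type*} [CommRing A] (s : PowerSeries A) (b : A) (m : ℕ) :
    rootCoeff s b m = b ^ m * ((if m = 1 then (1 : A) else 0) -
      ∑ k ∈ Finset.range m, rootCoeff s b k * PowerSeries.coeff m (s ^ k)) := by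
  rw [rootCoeff, ← Finset.sum_attach (Finset.range m)
    (fun k => rootCoeff s b k * PowerSeries.coeff m (s ^ k))]

lemma coeff_pow_eq_zero {A : Type*} [CommRing A] {s : PowerSeries A}
    (hs : PowerSeries.constantCoeff s = 0) {m k : ℕ} (h : m < k) :
    PowerSeries.coeff m (s ^ k) = 0 := by
  have hX : (PowerSeries.X : PowerSeries A) ∣ s := PowerSeries.X_dvd_iff.mpr hs
  have : (PowerSeries.X : PowerSeries A) ^ k ∣ s ^ k := pow_dvd_pow_of_dvd hX k
  exact PowerSeries.X_pow_dvd_iff.mp this m h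

lemma coeff_self_pow {A : Type*} [CommRing A] {s : PowerSeries A}
    (hs : PowerSeries.constantCoeff s = 0) (m : ℕ) :
    PowerSeries.coeff m (s ^ m) = (PowerSeries.coeff 1 s) ^ m := by
  obtain ⟨q, rfl⟩ := PowerSeries.X_dvd_iff.mpr hs
  have h := PowerSeries.coeff_X_pow_mul (q ^ m) m 0
  rw [zero_add] at h
  rw [mul_pow, h]
  simp [PowerSeries.coeff_zero_eq_constantCoeff, ← map_pow]

/-- Let `A` be a commutative ring and `n` a natural number invertible in `A`.
Set `s = (1+t)^n - 1` in `A[[t]]`. Then there exists a power series `f` with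
zero constant term such that `1 + s = (1 + f(s))^n`. -/
theorem exists_nth_root_of_one_add {A : Type*} [CommRing A] (n : ℕ)
    (hn : IsUnit (n : A)) :
    ∃ f : PowerSeries A,
      PowerSeries.constantCoeff f = 0 ∧
      1 + ((1 + PowerSeries.X) ^ n - 1) =
        (1 + PowerSeries.substitute ((1 + PowerSeries.X : PowerSeries A) ^ n - 1) f) ^ n := by
  set s : PowerSeries A := (1 + PowerSeries.X) ^ n - 1 with hs_def
  have hs0 : PowerSeries.constantCoeff s = 0 := by
    simp [hs_def]
  have hs1 : PowerSeries.coeff 1 s = (n : A) := by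
    simp [hs_def, PowerSeries.coeff_one_pow]
  obtain ⟨u, hu⟩ := hn
  set b : A := ((u⁻¹ : Aˣ) : A) with hb
  have hbn : b * (n : A) = 1 := by
    rw [← hu, hb]; exact u.inv_mul
  refine ⟨PowerSeries.mk (rootCoeff s b), ?_, ?_⟩
  · rw [← PowerSeries.coeff_zero_eq_constantCoeff_apply, PowerSeries.coeff_mk,
      rootCoeff_eq]
    simp
  · have key : PowerSeries.substitute s (PowerSeries.mk (rootCoeff s b)) = PowerSeries.X := by
      ext m
      rw [PowerSeries.substitute, PowerSeries.coeff_mk]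
      simp only [PowerSeries.coeff_mk]
      rw [Finset.sum_range_succ, coeff_self_pow hs0, hs1, rootCoeff_eq]
      have h2 : b ^ m * (((if m = 1 then (1 : A) else 0) -
          ∑ k ∈ Finset.range m, rootCoeff s b k * PowerSeries.coeff m (s ^ k)) * (n : A) ^ m)
          = (if m = 1 then (1 : A) else 0) -
          ∑ k ∈ Finset.range m, rootCoeff s b k * PowerSeries.coeff m (s ^ k) := by
        rw [mul_comm _ ((n : A) ^ m), ← mul_assoc, ← mul_pow, hbn, one_pow, one_mul]
      rw [mul_assoc, h2, PowerSeries.coeff_X]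
      ring
    rw [key]
    ring
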